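/- Let R be a commutative local ring in which 2 is a unit. Then the full matrix ring M_2(R) is very clean. -/
import Mathlib


/-- An element `a` of a ring is *very clean* if there is an idempotent `e` commuting with `a`
such that `a - e` or `a + e` is a unit. -/
def IsVeryClean {R : Type*} [Ring R] (a : R) : Prop :=
  ∃ e : R, IsIdempotentElem e ∧ a * e = e * a ∧ (IsUnit (a - e) ∨ IsUnit (a + e))

/-- A ring is *very clean* if every element is very clean. -/
def VeryCleanRing (R : Type*) [Ring R] : Prop :=
  ∀ a : R, IsVeryClean a

/-- An element `a` of a ring is *strongly clean* if there is an idempotent `e` commuting with `a`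
such that `a - e` is a unit. -/
def IsStronglyClean {R : Type*} [Ring R] (a : R) : Prop :=
  ∃ e : R, IsIdempotentElem e ∧ a * e = e * a ∧ IsUnit (a - e)

/-- A ring is *strongly clean* if every element is strongly clean. -/
def StronglyCleanRing (R : Type*) [Ring R] : Prop :=
  ∀ a : R, IsStronglyClean a

lemma aux_local {R : Type*} [CommRing R] [IsLocalRing R] (h2 : IsUnit (2 : R))
    {x y z : R} (hx : ¬ IsUnit x) (hsum : y + z = 2 * (x + 1)) :
    IsUnit y ∨ IsUnit z := by
  have hx1 : IsUnit (x + 1) := by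
    rcases IsLocalRing.isUnit_or_isUnit_of_isUnit_add (a := x + 1) (b := -x)
      (by simp) with h | h
    · exact h
    · exact absurd (by simpa using h.neg) hx
  exact IsLocalRing.isUnit_or_isUnit_of_isUnit_add (hsum ▸ h2.mul hx1)

theorem M2_very_clean_of_two_unit (R : Type*) [CommRing R] [IsLocalRing R]
    (h2 : IsUnit (2 : R)) :
    VeryCleanRing (Matrix (Fin 2) (Fin 2) R) := by
  intro A
  by_cases hA : IsUnit A
  · exact ⟨0, IsIdempotentElem.zero, by simp, Or.inl (by simpa using hA)⟩
  · refine ⟨1, IsIdempotentElem.one, by simp, ?_⟩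
    rw [Matrix.isUnit_iff_isUnit_det] at hA ⊢
    rw [Matrix.isUnit_iff_isUnit_det (A + 1)]
    refine aux_local h2 hA ?_
    simp [Matrix.det_fin_two, Matrix.sub_apply, Matrix.add_apply, Matrix.one_apply]
    ring
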